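/- For every x > 0, ρ(x) = ∫₀¹ t/(x + t)² dt, where ρ(x) = log(1 + 1/x) − 1/(x+1); in particular ρ is a generalized Stieltjes function of order 2. -/

import Mathlib

open MeasureTheory intervalIntegral

lemma rho_key (x : ℝ) (hx : 0 < x) :
    Real.log (1 + 1 / x) - 1 / (x + 1) = ∫ t in (0 : ℝ)..1, t / (x + t) ^ 2 := by
  have hne : ∀ t ∈ Set.uIcc (0:ℝ) 1, x + t ≠ 0 := by
    intro t ht
    rw [Set.uIcc_of_le (by norm_num)] at ht
    nlinarith [ht.1]
  have hderiv : ∀ t ∈ Set.uIcc (0:ℝ) 1,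
      HasDerivAt (fun t => Real.log (x + t) + x / (x + t)) (t / (x + t) ^ 2) t := by
    intro t ht
    have hxt : x + t ≠ 0 := hne t ht
    have h1 : HasDerivAt (fun t : ℝ => x + t) 1 t := by
      simpa using (hasDerivAt_id t).const_add x
    have h2 : HasDerivAt (fun t => Real.log (x + t)) (1 / (x + t)) t := by
      simpa using (h1.log hxt)
    have h3 := HasDerivAt.div (hasDerivAt_const t x) h1 hxt
    refine (h2.add h3).congr_deriv ?_
    have hxt2 : (x + t) ^ 2 ≠ 0 := pow_ne_zero _ hxt
    field_simp
    ring
  have hcont : ContinuousOn (fun t : ℝ => t / (x + t) ^ 2) (Set.uIcc 0 1) := by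
    apply ContinuousOn.div continuousOn_id (by fun_prop)
    intro t ht
    exact pow_ne_zero _ (hne t ht)
  rw [intervalIntegral.integral_eq_sub_of_hasDerivAt (fun t ht => hderiv t ht)
    (hcont.intervalIntegrable)]
  have hx1 : (0:ℝ) < x + 1 := by linarith
  have h1x : 1 + 1/x = (x+1)/x := by field_simp
  rw [h1x, Real.log_div hx1.ne' hx.ne']
  rw [show x + (0:ℝ) = x by ring]
  field_simp
  ring

/-- A generalized Stieltjes function of order 2 on `(0,∞)`:
`f(x) = c + ∫₀^∞ dμ(t)/(x+t)²` with `c ≥ 0` and `μ` a positive measure on `[0,∞)`. -/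
def IsGenStieltjesOrderTwo (f : ℝ → ℝ) : Prop :=
  ∃ (c : ℝ) (μ : MeasureTheory.Measure ℝ), 0 ≤ c ∧
    ∀ x : ℝ, 0 < x → f x = c + ∫ t in Set.Ici (0 : ℝ), ((x + t) ^ 2)⁻¹ ∂μ

/-- For every `x > 0`, `ρ(x) = log(1+1/x) − 1/(x+1) = ∫₀¹ t/(x+t)² dt`; in particular,
`ρ` is a generalized Stieltjes function of order `2`. -/
theorem rho_genStieltjes_two :
    (∀ x : ℝ, 0 < x →
      Real.log (1 + 1 / x) - 1 / (x + 1) = ∫ t in (0 : ℝ)..1, t / (x + t) ^ 2) ∧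
    IsGenStieltjesOrderTwo (fun x => Real.log (1 + 1 / x) - 1 / (x + 1)) := by
  constructor
  · exact fun x hx => rho_key x hx
  · set f : ℝ → NNReal := fun t => (Set.Icc (0:ℝ) 1).indicator Real.toNNReal t with hf
    have hfm : Measurable f := measurable_real_toNNReal.indicator measurableSet_Icc
    refine ⟨0, MeasureTheory.volume.withDensity (fun t => (f t : ENNReal)), le_refl 0, ?_⟩
    intro x hx
    simp only [zero_add]
    rw [setIntegral_withDensity_eq_setIntegral_smul hfm _ measurableSet_Ici]
    have heq : ∀ t : ℝ, f t • ((x + t) ^ 2)⁻¹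
        = (Set.Icc (0:ℝ) 1).indicator (fun t => t / (x + t) ^ 2) t := by
      intro t
      by_cases ht : t ∈ Set.Icc (0:ℝ) 1
      · simp [hf, Set.indicator_of_mem ht, NNReal.smul_def, Real.coe_toNNReal t ht.1,
          div_eq_mul_inv]
      · simp [hf, Set.indicator_of_notMem ht]
    rw [rho_key x hx]
    simp_rw [heq]
    rw [MeasureTheory.setIntegral_indicator measurableSet_Icc,
      Set.inter_eq_self_of_subset_right (Set.Icc_subset_Ici_self),
      MeasureTheory.integral_Icc_eq_integral_Ioc,
      ← intervalIntegral.integral_of_le (by norm_num : (0:ℝ) ≤ 1)]
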